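/- Let μ be the law of a random environment f : ℤ² → ℝ, and suppose μ is invariant under the sign-reversing reflection f ↦ ((x,y) ↦ −f(−x,y)). Then for every δ ∈ [0,1/2], the random walk (X_n)_{n≥0} in the environment f with bias δ satisfies: the processes (X_n)_{n≥0} and (−X_n)_{n≥0} have the same distribution under the annealed law ℙ. -/

import Mathlib

open MeasureTheory ProbabilityTheory

noncomputable section

/-- The sign function: 1 if positive, -1 if negative, 0 if zero. -/
def sgn (t : ℝ) : ℝ := if 0 < t then 1 else if t < 0 then -1 else 0

/-- The random walk in the environment `f` with bias `δ`, driven by the field `u` of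
uniform variables. -/
def walk (f u : ℤ × ℤ → ℝ) (δ : ℝ) : ℕ → ℤ
  | 0 => 0
  | n + 1 =>
      let x := walk f u δ n
      if 1 / 2 - δ * sgn (f (x, (n : ℤ))) ≤ u (x, (n : ℤ)) then x + 1 else x - 1

/-- Invariance under the sign-reversing reflection `f ↦ ((x,y) ↦ -f(-x,y))`. -/
def SignReversingReflectionInvariant (μ : Measure ((ℤ × ℤ) → ℝ)) : Prop :=
  Measure.map (fun f (z : ℤ × ℤ) => -f (-z.1, z.2)) μ = μ

/-! ### Auxiliary lemmas -/

lemma sgn_neg' (a : ℝ) : sgn (-a) = - sgn a := by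
  unfold sgn
  rcases lt_trichotomy a 0 with h|h|h <;>
    simp [h, h.le, not_lt.2 h.le, neg_pos, h.not_gt]

lemma sgn_mem (a : ℝ) : sgn a = 1 ∨ sgn a = 0 ∨ sgn a = -1 := by
  unfold sgn; split_ifs <;> simp

/-- The deterministic reflection identity for the walk, valid whenever the driving field
avoids the three critical values `1/2 - δ`, `1/2`, `1/2 + δ`. -/
lemma walk_reflect (f u : ℤ × ℤ → ℝ) (δ : ℝ)
    (hu : ∀ z, u z ≠ 1/2 - δ ∧ u z ≠ 1/2 ∧ u z ≠ 1/2 + δ) (n : ℕ) :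
    walk (fun z => -f (-z.1, z.2)) (fun z => 1 - u (-z.1, z.2)) δ n = - walk f u δ n := by
  have key : ∀ z : ℤ × ℤ, u z ≠ 1/2 - δ * sgn (f z) := by
    intro z
    rcases sgn_mem (f z) with h|h|h <;> rw [h] <;> intro hc
    · exact (hu z).1 (by rw [hc]; ring)
    · exact (hu z).2.1 (by rw [hc]; ring)
    · exact (hu z).2.2 (by rw [hc]; ring)
  induction n with
  | zero => simp [walk]
  | succ n ih =>
      simp only [walk, ih]
      rw [show (- -walk f u δ n, (n:ℤ)) = (walk f u δ n, (n:ℤ)) by simp, sgn_neg']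
      by_cases hc : 1 / 2 - δ * sgn (f (walk f u δ n, (n:ℤ))) ≤ u (walk f u δ n, (n:ℤ))
      · rw [if_pos hc, if_neg ?_]
        · ring
        · intro hc2
          have hne := key (walk f u δ n, (n:ℤ))
          have hlt : 1 / 2 - δ * sgn (f (walk f u δ n, (n:ℤ))) < u (walk f u δ n, (n:ℤ)) :=
            lt_of_le_of_ne hc (Ne.symm hne)
          linarith
      · rw [if_neg hc, if_pos ?_]
        · ring
        · push_neg at hc
          linarith

lemma measurable_sgn : Measurable sgn := by
  unfold sgn
  exact Measurable.ite (measurableSet_lt measurable_const measurable_id)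
    measurable_const (Measurable.ite (measurableSet_lt measurable_id measurable_const)
      measurable_const measurable_const)

lemma measurable_eval' {α : Type*} [MeasurableSpace α] {g : α → ℤ × ℤ} (hg : Measurable g)
    {h : α → (ℤ × ℤ) → ℝ} (hh : Measurable h) : Measurable fun a => h a (g a) := by
  intro S hS
  have hset : (fun a => h a (g a)) ⁻¹' S
      = ⋃ z : ℤ × ℤ, (g ⁻¹' {z}) ∩ ((fun a => h a z) ⁻¹' S) := by
    ext a
    simp only [Set.mem_preimage, Set.mem_iUnion, Set.mem_inter_iff, Set.mem_singleton_iff]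
    exact ⟨fun h' => ⟨g a, rfl, h'⟩, fun ⟨z, hz, h'⟩ => hz ▸ h'⟩
  rw [hset]
  exact MeasurableSet.iUnion fun z =>
    (hg (measurableSet_singleton z)).inter (((measurable_pi_apply z).comp hh) hS)

lemma measurable_walk (δ : ℝ) (n : ℕ) :
    Measurable (fun p : (((ℤ × ℤ) → ℝ) × ((ℤ × ℤ) → ℝ)) => walk p.1 p.2 δ n) := by
  induction n with
  | zero => simp [walk]
  | succ n ih =>
      have hg : Measurable (fun p : (((ℤ × ℤ) → ℝ) × ((ℤ × ℤ) → ℝ)) =>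
          ((walk p.1 p.2 δ n, (n : ℤ)) : ℤ × ℤ)) := ih.prodMk measurable_const
      have h1 : Measurable (fun p : (((ℤ × ℤ) → ℝ) × ((ℤ × ℤ) → ℝ)) =>
          p.1 (walk p.1 p.2 δ n, (n : ℤ))) := measurable_eval' hg measurable_fst
      have h2 : Measurable (fun p : (((ℤ × ℤ) → ℝ) × ((ℤ × ℤ) → ℝ)) =>
          p.2 (walk p.1 p.2 δ n, (n : ℤ))) := measurable_eval' hg measurable_snd
      have hcond : MeasurableSet {p : (((ℤ × ℤ) → ℝ) × ((ℤ × ℤ) → ℝ)) |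
          1 / 2 - δ * sgn (p.1 (walk p.1 p.2 δ n, (n : ℤ))) ≤ p.2 (walk p.1 p.2 δ n, (n : ℤ))} :=
        measurableSet_le (measurable_const.sub (measurable_const.mul (measurable_sgn.comp h1))) h2
      have hfun : (fun p : (((ℤ × ℤ) → ℝ) × ((ℤ × ℤ) → ℝ)) => walk p.1 p.2 δ (n + 1))
          = fun p => if 1 / 2 - δ * sgn (p.1 (walk p.1 p.2 δ n, (n : ℤ)))
              ≤ p.2 (walk p.1 p.2 δ n, (n : ℤ)) then walk p.1 p.2 δ n + 1
            else walk p.1 p.2 δ n - 1 := by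
        funext p; simp [walk]
      rw [hfun]
      exact Measurable.ite hcond ((measurable_from_top (f := fun k : ℤ => k + 1)).comp ih)
        ((measurable_from_top (f := fun k : ℤ => k - 1)).comp ih)

lemma vol_Icc_reflect (t : Set ℝ) (ht : MeasurableSet t) :
    volume.restrict (Set.Icc (0:ℝ) 1) ((fun a : ℝ => 1 - a) ⁻¹' t)
      = volume.restrict (Set.Icc (0:ℝ) 1) t := by
  have hr : Measurable (fun a : ℝ => 1 - a) := measurable_const.sub measurable_id
  have hmp : Measure.map (fun a : ℝ => 1 - a) (volume.restrict (Set.Icc 0 1))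
      = volume.restrict (Set.Icc 0 1) := by
    have h1 : ((fun a : ℝ => 1 - a) ⁻¹' Set.Icc 0 1) = Set.Icc 0 1 := by
      ext x
      simp only [Set.mem_preimage, Set.mem_Icc]
      constructor <;> intro h <;> exact ⟨by linarith [h.1, h.2], by linarith [h.1, h.2]⟩
    have h2 := Measure.restrict_map (μ := volume) hr (measurableSet_Icc (a := (0:ℝ)) (b := 1))
    rw [Measure.map_sub_left_eq_self volume 1, h1] at h2
    exact h2.symm
  conv_rhs => rw [← hmp]
  rw [Measure.map_apply hr ht]

/-- The law of an i.i.d. field of uniform random variables on `[0,1]` indexed by `ℤ × ℤ` is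
invariant under the reflection `u ↦ ((x,y) ↦ 1 - u(-x,y))`. -/
lemma map_uniform_reflect
    {Ω : Type} [MeasurableSpace Ω] (P : Measure Ω) [IsProbabilityMeasure P]
    (U : Ω → (ℤ × ℤ) → ℝ) (hU : Measurable U)
    (hUunif : ∀ z : ℤ × ℤ, Measure.map (fun ω => U ω z) P = volume.restrict (Set.Icc 0 1))
    (hUindep : iIndepFun (fun z ω => U ω z) P) :
    Measure.map (fun ω (z : ℤ × ℤ) => 1 - U ω (-z.1, z.2)) P = Measure.map U P := by
  set σ : ℤ × ℤ → ℤ × ℤ := fun z => (-z.1, z.2) with hσ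
  have hσσ : ∀ z, σ (σ z) = z := by intro z; simp [hσ]
  set V : Ω → (ℤ × ℤ) → ℝ := fun ω z => 1 - U ω (σ z) with hV
  have hVm : Measurable V :=
    measurable_pi_lambda _ fun z => measurable_const.sub ((measurable_pi_apply (σ z)).comp hU)
  haveI : IsProbabilityMeasure (Measure.map V P) := Measure.isProbabilityMeasure_map hVm.aemeasurable
  haveI : IsProbabilityMeasure (Measure.map U P) := Measure.isProbabilityMeasure_map hU.aemeasurable
  have hpiC : ∀ _i : ℤ × ℤ, IsPiSystem {s : Set ℝ | MeasurableSet s} := by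
    intro _i s hs t ht _
    simp only [Set.mem_setOf_eq] at hs ht ⊢
    exact hs.inter ht
  have huC : ∀ _i : ℤ × ℤ, Set.univ ∈ {s : Set ℝ | MeasurableSet s} := by
    intro _i
    simp only [Set.mem_setOf_eq]
    exact MeasurableSet.univ
  refine ext_of_generate_finite
    (squareCylinders fun _ : ℤ × ℤ => {s : Set ℝ | MeasurableSet s})
    generateFrom_squareCylinders.symm
    (isPiSystem_squareCylinders hpiC huC) ?_ (by simp)
  rintro S ⟨s, t, ht, rfl⟩
  have htm : ∀ i, MeasurableSet (t i) := fun i => ht i trivial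
  have hpim : MeasurableSet ((s : Set (ℤ × ℤ)).pi t) :=
    MeasurableSet.pi s.countable_toSet (fun i _ => htm i)
  rw [Measure.map_apply hVm hpim, Measure.map_apply hU hpim]
  set sets' : (ℤ × ℤ) → Set ℝ := fun j => (fun a : ℝ => 1 - a) ⁻¹' (t (σ j)) with hsets'
  have hsets'm : ∀ j, MeasurableSet (sets' j) :=
    fun j => (measurable_const.sub measurable_id) (htm (σ j))
  have hσinj : Function.Injective σ := by
    intro a b hab
    have := congrArg σ hab
    rwa [hσσ, hσσ] at this
  have hL : V ⁻¹' ((s : Set (ℤ × ℤ)).pi t)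
      = ⋂ j ∈ (s.image σ), (fun ω => U ω j) ⁻¹' (sets' j) := by
    ext ω
    simp only [Set.mem_preimage, Set.mem_pi, Finset.coe_image, Set.mem_iInter,
      Finset.mem_image, Finset.mem_coe, hsets']
    constructor
    · rintro h j ⟨i, hi, rfl⟩
      rw [hσσ i]
      exact h i hi
    · intro h i hi
      have h2 := h (σ i) ⟨i, hi, rfl⟩
      rw [hσσ i] at h2
      exact h2
  have hRR : U ⁻¹' ((s : Set (ℤ × ℤ)).pi t) = ⋂ i ∈ s, (fun ω => U ω i) ⁻¹' (t i) := by
    ext ω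
    simp [Set.mem_pi]
  rw [hL, hRR,
    hUindep.measure_inter_preimage_eq_mul (s.image σ) (sets := sets')
      (fun j _ => hsets'm j),
    hUindep.measure_inter_preimage_eq_mul s (sets := t) (fun i _ => htm i)]
  have hfac : ∀ j : ℤ × ℤ, P ((fun ω => U ω j) ⁻¹' sets' j)
      = volume.restrict (Set.Icc 0 1) (t (σ j)) := by
    intro j
    have h1 : P ((fun ω => U ω j) ⁻¹' sets' j)
        = Measure.map (fun ω => U ω j) P (sets' j) :=
      (Measure.map_apply ((measurable_pi_apply j).comp hU) (hsets'm j)).symm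
    rw [h1, hUunif j, hsets']
    exact vol_Icc_reflect (t (σ j)) (htm (σ j))
  have hfac2 : ∀ i : ℤ × ℤ, P ((fun ω => U ω i) ⁻¹' t i)
      = volume.restrict (Set.Icc 0 1) (t i) := by
    intro i
    have h1 : P ((fun ω => U ω i) ⁻¹' t i) = Measure.map (fun ω => U ω i) P (t i) :=
      (Measure.map_apply ((measurable_pi_apply i).comp hU) (htm i)).symm
    rw [h1, hUunif i]
  calc ∏ j ∈ s.image σ, P ((fun ω => U ω j) ⁻¹' sets' j)
      = ∏ j ∈ s.image σ, volume.restrict (Set.Icc 0 1) (t (σ j)) :=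
        Finset.prod_congr rfl fun j _ => hfac j
    _ = ∏ i ∈ s, volume.restrict (Set.Icc 0 1) (t (σ (σ i))) :=
        Finset.prod_image (fun a _ b _ hab => hσinj hab)
    _ = ∏ i ∈ s, P ((fun ω => U ω i) ⁻¹' t i) := by
        refine Finset.prod_congr rfl fun i _ => ?_
        rw [hσσ, hfac2 i]

/-- Distributional reflection symmetry of the walk: under the annealed law, `(X_n)` and
`(-X_n)` have the same distribution. -/
theorem walk_reflection_symmetry
    (μ : Measure ((ℤ × ℤ) → ℝ)) [IsProbabilityMeasure μ]
    (hR : SignReversingReflectionInvariant μ)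
    (δ : ℝ) (hδ : δ ∈ Set.Icc 0 (1 / 2 : ℝ))
    (Ω : Type) [MeasurableSpace Ω] (P : Measure Ω) [IsProbabilityMeasure P]
    (F U : Ω → (ℤ × ℤ) → ℝ)
    (hF : Measurable F) (hU : Measurable U)
    (hFlaw : Measure.map F P = μ)
    (hUunif : ∀ z : ℤ × ℤ,
      Measure.map (fun ω => U ω z) P = volume.restrict (Set.Icc 0 1))
    (hUindep : iIndepFun (fun z ω => U ω z) P)
    (hFU : IndepFun F U P) :
    Measure.map (fun ω (n : ℕ) => walk (F ω) (U ω) δ n) P =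
      Measure.map (fun ω (n : ℕ) => -walk (F ω) (U ω) δ n) P := by
  classical
  set Tf : ((ℤ × ℤ) → ℝ) → ((ℤ × ℤ) → ℝ) := fun f z => -f (-z.1, z.2) with hTf
  set Tu : ((ℤ × ℤ) → ℝ) → ((ℤ × ℤ) → ℝ) := fun u z => 1 - u (-z.1, z.2) with hTu
  have hTfm : Measurable Tf :=
    measurable_pi_lambda _ fun z => (measurable_pi_apply (-z.1, z.2)).neg
  have hTum : Measurable Tu :=
    measurable_pi_lambda _ fun z => measurable_const.sub (measurable_pi_apply (-z.1, z.2))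
  haveI : IsProbabilityMeasure (Measure.map F P) := Measure.isProbabilityMeasure_map hF.aemeasurable
  haveI : IsProbabilityMeasure (Measure.map U P) := Measure.isProbabilityMeasure_map hU.aemeasurable
  -- joint law is the product law
  have hprod : Measure.map (fun ω => (F ω, U ω)) P = (Measure.map F P).prod (Measure.map U P) :=
    (indepFun_iff_map_prod_eq_prod_map_map hF.aemeasurable hU.aemeasurable).mp hFU
  -- invariance of the marginal laws
  have hmapU : Measure.map Tu (Measure.map U P) = Measure.map U P := by
    rw [Measure.map_map hTum hU]
    exact map_uniform_reflect P U hU hUunif hUindep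
  have hmapF : Measure.map Tf (Measure.map F P) = Measure.map F P := by
    rw [hFlaw]; exact hR
  -- invariance of the joint law
  have hpair : Measure.map (fun ω => (Tf (F ω), Tu (U ω))) P
      = Measure.map (fun ω => (F ω, U ω)) P := by
    have h1 : (fun ω => (Tf (F ω), Tu (U ω)))
        = (Prod.map Tf Tu) ∘ (fun ω => (F ω, U ω)) := rfl
    rw [h1, ← Measure.map_map (hTfm.prodMap hTum) (hF.prodMk hU), hprod,
      ← Measure.map_prod_map _ _ hTfm hTum, hmapF, hmapU]
  -- a.s. avoidance of the critical values
  have hzero : ∀ (c : ℝ), ∀ᵐ ω ∂P, ∀ z : ℤ × ℤ, U ω z ≠ c := by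
    intro c
    rw [ae_all_iff]
    intro z
    have h1 : P ((fun ω => U ω z) ⁻¹' {c}) = Measure.map (fun ω => U ω z) P {c} :=
      (Measure.map_apply ((measurable_pi_apply z).comp hU) (measurableSet_singleton c)).symm
    have h2 : (volume.restrict (Set.Icc (0:ℝ) 1)) {c} = 0 := by
      rw [Measure.restrict_apply (measurableSet_singleton c)]
      exact measure_mono_null Set.inter_subset_left Real.volume_singleton
    have h0 : P {ω | U ω z = c} = 0 := by
      have : P {ω | U ω z = c} = P ((fun ω => U ω z) ⁻¹' {c}) := rfl
      rw [this, h1, hUunif z, h2]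
    rw [ae_iff]
    simpa [not_not] using h0
  -- a.e. pathwise reflection identity
  have hae : ∀ᵐ ω ∂P, (fun n : ℕ => walk (Tf (F ω)) (Tu (U ω)) δ n)
      = fun n : ℕ => -walk (F ω) (U ω) δ n := by
    filter_upwards [hzero (1/2 - δ), hzero (1/2), hzero (1/2 + δ)] with ω h1 h2 h3
    funext n
    exact walk_reflect (F ω) (U ω) δ (fun z => ⟨h1 z, h2 z, h3 z⟩) n
  have hWm : Measurable (fun p : (((ℤ × ℤ) → ℝ) × ((ℤ × ℤ) → ℝ)) =>
      fun n : ℕ => walk p.1 p.2 δ n) :=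
    measurable_pi_lambda _ fun n => measurable_walk δ n
  calc Measure.map (fun ω (n : ℕ) => walk (F ω) (U ω) δ n) P
      = Measure.map ((fun p : (((ℤ × ℤ) → ℝ) × ((ℤ × ℤ) → ℝ)) => fun n : ℕ => walk p.1 p.2 δ n)
          ∘ (fun ω => (F ω, U ω))) P := rfl
    _ = Measure.map (fun p : (((ℤ × ℤ) → ℝ) × ((ℤ × ℤ) → ℝ)) => fun n : ℕ => walk p.1 p.2 δ n)
          (Measure.map (fun ω => (F ω, U ω)) P) := (Measure.map_map hWm (hF.prodMk hU)).symm
    _ = Measure.map (fun p : (((ℤ × ℤ) → ℝ) × ((ℤ × ℤ) → ℝ)) => fun n : ℕ => walk p.1 p.2 δ n)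
          (Measure.map (fun ω => (Tf (F ω), Tu (U ω))) P) := by rw [hpair]
    _ = Measure.map ((fun p : (((ℤ × ℤ) → ℝ) × ((ℤ × ℤ) → ℝ)) => fun n : ℕ => walk p.1 p.2 δ n)
          ∘ (fun ω => (Tf (F ω), Tu (U ω)))) P :=
        Measure.map_map hWm ((hTfm.comp hF).prodMk (hTum.comp hU))
    _ = Measure.map (fun ω (n : ℕ) => walk (Tf (F ω)) (Tu (U ω)) δ n) P := rfl
    _ = Measure.map (fun ω (n : ℕ) => -walk (F ω) (U ω) δ n) P := Measure.map_congr hae
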